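/- The recursively defined HOMFLY polynomial f of a forest quiver is well-defined: the result of the recursion does not depend on the order in which leaves are removed or on the decomposition into connected components. -/

import Mathlib

open scoped Classical

noncomputable section

abbrev K : Type := FractionRing (MvPolynomial Bool ℚ)

/-- The variable `a` of the HOMFLY polynomial. -/
def A : K := algebraMap (MvPolynomial Bool ℚ) K (MvPolynomial.X false)

/-- The variable `z` of the HOMFLY polynomial. -/
def Z : K := algebraMap (MvPolynomial Bool ℚ) K (MvPolynomial.X true)

/-- A rule assigning a value to every finite simple graph. -/
abbrev GraphFun : Type 1 :=
  ∀ (V : Type) [Fintype V] [DecidableEq V], SimpleGraph V → K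

/-- `v` is a leaf whose unique neighbor is `w`. -/
def IsLeaf {V : Type} (G : SimpleGraph V) (v w : V) : Prop :=
  G.neighborSet v = {w}

/-- The defining recursion of the HOMFLY polynomial of a forest:
value `1` on the empty graph, `(z+z⁻¹)/a − z⁻¹/a³` on a single vertex,
the leaf-removal recursion, and multiplicativity over disjoint unions
(formulated via vertex subsets with no crossing edges). -/
def HomflyRules (f : GraphFun) : Prop :=
  (∀ (V : Type) [Fintype V] [DecidableEq V] (G : SimpleGraph V),
      IsEmpty V → f V G = 1) ∧
  (∀ (V : Type) [Fintype V] [DecidableEq V] (G : SimpleGraph V),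
      Fintype.card V = 1 → f V G = (Z + Z⁻¹) / A - Z⁻¹ / A ^ 3) ∧
  (∀ (V : Type) [Fintype V] [DecidableEq V] (G : SimpleGraph V),
      G.IsAcyclic → ∀ v w : V, IsLeaf G v w →
      f V G = (Z / A) * f ↥{x : V | x ≠ v} (G.induce {x : V | x ≠ v}) +
        (1 / A ^ 2) * f ↥{x : V | x ≠ v ∧ x ≠ w} (G.induce {x : V | x ≠ v ∧ x ≠ w})) ∧
  (∀ (V : Type) [Fintype V] [DecidableEq V] (G : SimpleGraph V),
      G.IsAcyclic → ∀ s : Set V, (∀ x ∈ s, ∀ y ∉ s, ¬ G.Adj x y) →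
      f V G = f ↥s (G.induce s) * f ↥sᶜ (G.induce sᶜ))

def xK : K := Z / A
def yK : K := 1 / A ^ 2
def sK : K := (Z + Z⁻¹) / A - Z⁻¹ / A ^ 3

namespace Homfly

variable {V : Type} [DecidableEq V]

/-- low-degree filter -/
def nbhd (G : SimpleGraph V) (t : Finset V) (v : V) : Finset V :=
  t.filter (fun u => G.Adj v u)

def LowCond (G : SimpleGraph V) (t : Finset V) : Prop :=
  ∃ v ∈ t, (nbhd G t v).card ≤ 1

/-- fuel-based recursion -/
def Hfix (G : SimpleGraph V) : ℕ → Finset V → K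
  | 0, _ => 1
  | (n+1), t =>
    if h : LowCond G t then
      if hN : (nbhd G t h.choose) = ∅ then sK * Hfix G n (t.erase h.choose)
      else xK * Hfix G n (t.erase h.choose) +
        yK * Hfix G n ((t.erase h.choose).erase ((Finset.nonempty_iff_ne_empty.mpr hN).choose))
    else 1

lemma Hfix_congr (G : SimpleGraph V) :
    ∀ (m n : ℕ) (t : Finset V), t.card ≤ m → t.card ≤ n → Hfix G m t = Hfix G n t := by
  intro m
  induction m with
  | zero =>
    intro n t ht _
    have ht0 : t = ∅ := Finset.card_eq_zero.mp (Nat.le_zero.mp ht)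
    subst ht0
    cases n with
    | zero => rfl
    | succ n =>
      rw [Hfix, Hfix]
      have : ¬ LowCond G (∅ : Finset V) := by
        rintro ⟨v, hv, -⟩; exact absurd hv (Finset.notMem_empty v)
      rw [dif_neg this]
  | succ m ih =>
    intro n t htm htn
    rcases Finset.eq_empty_or_nonempty t with rfl | htne
    · cases n with
      | zero =>
        rw [Hfix, Hfix]
        have : ¬ LowCond G (∅ : Finset V) := by
          rintro ⟨v, hv, -⟩; exact absurd hv (Finset.notMem_empty v)
        rw [dif_neg this]
      | succ n =>
        rw [Hfix, Hfix]
        have : ¬ LowCond G (∅ : Finset V) := by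
          rintro ⟨v, hv, -⟩; exact absurd hv (Finset.notMem_empty v)
        rw [dif_neg this, dif_neg this]
    · cases n with
      | zero =>
        exfalso
        have := Finset.card_pos.mpr htne
        omega
      | succ n =>
        rw [Hfix, Hfix]
        by_cases h : LowCond G t
        · rw [dif_pos h]
          have hvt : h.choose ∈ t := h.choose_spec.1
          have hce := Finset.card_erase_of_mem hvt
          have hpos := Finset.card_pos.mpr htne
          have hc1 : (t.erase h.choose).card ≤ m := by omega
          have hc1' : (t.erase h.choose).card ≤ n := by omega
          by_cases hN : (nbhd G t h.choose) = ∅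
          · rw [dif_pos hN, ih _ _ hc1 hc1', dif_pos h, dif_pos hN]
          · rw [dif_neg hN]
            have hc2 := Finset.card_erase_le (s := t.erase h.choose)
              (a := (Finset.nonempty_iff_ne_empty.mpr hN).choose)
            rw [ih _ _ hc1 hc1', ih _ _ (le_trans hc2 hc1) (le_trans hc2 hc1'), dif_pos h, dif_neg hN]
        · rw [dif_neg h, dif_neg h]


def Hfun (G : SimpleGraph V) (t : Finset V) : K := Hfix G t.card t

lemma Hfun_eq_Hfix (G : SimpleGraph V) {t : Finset V} {n : ℕ} (h : t.card ≤ n) :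
    Hfun G t = Hfix G n t := Hfix_congr G _ _ _ le_rfl h

@[simp] lemma Hfun_empty (G : SimpleGraph V) : Hfun G (∅ : Finset V) = 1 := rfl

lemma nbhd_erase (G : SimpleGraph V) (t : Finset V) (a u : V) :
    nbhd G (t.erase a) u = (nbhd G t u).erase a := by
  ext b
  simp only [nbhd, Finset.mem_filter, Finset.mem_erase]
  tauto

lemma erase_single {a b : V} (h : ¬ b = a) : ({a} : Finset V).erase b = {a} :=
  Finset.erase_eq_of_notMem (by simpa using h)

lemma mem_nbhd {G : SimpleGraph V} {t : Finset V} {v u : V} :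
    u ∈ nbhd G t v ↔ u ∈ t ∧ G.Adj v u := Finset.mem_filter

lemma choose_of_singleton {s : Finset V} {w : V} (hs : s = {w}) (h : s ≠ ∅) :
    (Finset.nonempty_iff_ne_empty.mpr h).choose = w := by
  subst hs
  exact Finset.mem_singleton.mp (Finset.nonempty_iff_ne_empty.mpr h).choose_spec

lemma Hfun_eq (G : SimpleGraph V) (t : Finset V) (h : LowCond G t) :
    Hfun G t = if hN : nbhd G t h.choose = ∅ then sK * Hfun G (t.erase h.choose)
      else xK * Hfun G (t.erase h.choose) +
        yK * Hfun G ((t.erase h.choose).erase ((Finset.nonempty_iff_ne_empty.mpr hN).choose)) := by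
  have hv := h.choose_spec.1
  have hpos : 0 < t.card := Finset.card_pos.mpr ⟨_, hv⟩
  obtain ⟨m, hm⟩ : ∃ m, t.card = m + 1 := ⟨t.card - 1, by omega⟩
  have h1 : Hfun G t = Hfix G (m + 1) t := Hfun_eq_Hfix G (by omega)
  have hce : (t.erase h.choose).card ≤ m := by
    have := Finset.card_erase_of_mem hv; omega
  rw [h1, Hfix, dif_pos h]
  by_cases hN : nbhd G t h.choose = ∅
  · rw [dif_pos hN, dif_pos hN, Hfun_eq_Hfix G hce]
  · rw [dif_neg hN, dif_neg hN, Hfun_eq_Hfix G hce,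
      Hfun_eq_Hfix G (le_trans (Finset.card_erase_le) hce)]

lemma Hfun_main (G : SimpleGraph V) :
    ∀ (n : ℕ) (t : Finset V), t.card ≤ n → ∀ v ∈ t,
      (nbhd G t v = ∅ → Hfun G t = sK * Hfun G (t.erase v)) ∧
      (∀ w, nbhd G t v = {w} →
        Hfun G t = xK * Hfun G (t.erase v) + yK * Hfun G ((t.erase v).erase w)) := by
  intro n
  induction n with
  | zero =>
    intro t ht v hv
    rw [Finset.card_eq_zero.mp (Nat.le_zero.mp ht)] at hv
    exact absurd hv (Finset.notMem_empty v)
  | succ n ih =>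
    intro t ht v hv
    have IHiso : ∀ (t' : Finset V), t'.card ≤ n → ∀ v' ∈ t',
        nbhd G t' v' = ∅ → Hfun G t' = sK * Hfun G (t'.erase v') :=
      fun t' h1 v' h2 => (ih t' h1 v' h2).1
    have IHleaf : ∀ (t' : Finset V), t'.card ≤ n → ∀ v' ∈ t', ∀ w',
        nbhd G t' v' = {w'} →
        Hfun G t' = xK * Hfun G (t'.erase v') + yK * Hfun G ((t'.erase v').erase w') :=
      fun t' h1 v' h2 => (ih t' h1 v' h2).2
    have hpos : 0 < t.card := Finset.card_pos.mpr ⟨_, hv⟩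
    have hec : ∀ a ∈ t, (t.erase a).card ≤ n := by
      intro a ha; have := Finset.card_erase_of_mem ha; omega
    have hec2 : ∀ a ∈ t, ∀ b, ((t.erase a).erase b).card ≤ n :=
      fun a ha b => le_trans Finset.card_erase_le (hec a ha)
    constructor
    · -- isolated case
      intro hA
      have hiso : ∀ u ∈ t, ¬ G.Adj v u := by
        intro u hu hadj
        have : u ∈ nbhd G t v := mem_nbhd.mpr ⟨hu, hadj⟩
        rw [hA] at this; exact absurd this (Finset.notMem_empty u)
      have hlow : LowCond G t := ⟨v, hv, by rw [hA]; simp⟩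
      rw [Hfun_eq G t hlow]
      rcases eq_or_ne hlow.choose v with he | he
      · have hA' : nbhd G t hlow.choose = ∅ := by rw [he]; exact hA
        rw [dif_pos hA', he]
      · -- diamond, v0 ≠ v
        obtain ⟨hv0t, hv0c⟩ := hlow.choose_spec
        set v₀ := hlow.choose with hv0def
        have hnadj : ¬ G.Adj v v₀ := hiso v₀ hv0t
        have hvmem : v ∈ t.erase v₀ := Finset.mem_erase.mpr ⟨fun hh => he hh.symm, hv⟩
        rcases Finset.eq_empty_or_nonempty (nbhd G t v₀) with h0 | hne0
        · rw [dif_pos h0]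
          have e1 : Hfun G (t.erase v₀) = sK * Hfun G ((t.erase v₀).erase v) := by
            apply IHiso _ (hec _ hv0t) _ hvmem
            rw [nbhd_erase, hA, Finset.erase_empty]
          have e2 : Hfun G (t.erase v) = sK * Hfun G ((t.erase v).erase v₀) := by
            apply IHiso _ (hec _ hv) _ (Finset.mem_erase.mpr ⟨he, hv0t⟩)
            rw [nbhd_erase, h0, Finset.erase_empty]
          rw [e1, e2, Finset.erase_right_comm]
        · obtain ⟨w₀, hw₀⟩ := Finset.card_eq_one.mp
            (le_antisymm hv0c (Finset.card_pos.mpr hne0))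
          have hw₀t : w₀ ∈ t := (mem_nbhd.mp (hw₀ ▸ Finset.mem_singleton_self w₀)).1
          have hadj₀ : G.Adj v₀ w₀ := (mem_nbhd.mp (hw₀ ▸ Finset.mem_singleton_self w₀)).2
          have hw₀v : w₀ ≠ v := by
            intro hh; subst hh; exact hnadj hadj₀.symm
          have hw₀v₀ : w₀ ≠ v₀ := fun hh => G.irrefl (hh ▸ hadj₀)
          have hne : nbhd G t v₀ ≠ ∅ := by rw [hw₀]; simp
          rw [dif_neg hne, choose_of_singleton hw₀ hne]
          -- expand both sides
          have e1 : Hfun G (t.erase v₀) = sK * Hfun G ((t.erase v₀).erase v) := by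
            apply IHiso _ (hec _ hv0t) _ hvmem
            rw [nbhd_erase, hA, Finset.erase_empty]
          have e2 : Hfun G ((t.erase v₀).erase w₀) = sK * Hfun G (((t.erase v₀).erase w₀).erase v) := by
            apply IHiso _ (hec2 _ hv0t _) _
              (Finset.mem_erase.mpr ⟨fun hh => hw₀v hh.symm, hvmem⟩)
            simp [nbhd_erase, hA]
          have e3 : Hfun G (t.erase v) = xK * Hfun G ((t.erase v).erase v₀) +
              yK * Hfun G (((t.erase v).erase v₀).erase w₀) := by
            apply IHleaf _ (hec _ hv) _ (Finset.mem_erase.mpr ⟨he, hv0t⟩) w₀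
            rw [nbhd_erase, hw₀, erase_single (Ne.symm hw₀v)]
          rw [e1, e2, e3, Finset.erase_right_comm (s := t) (a := v₀) (b := v),
            Finset.erase_right_comm (s := t.erase v₀) (a := w₀) (b := v),
            Finset.erase_right_comm (s := t) (a := v₀) (b := v)]
          ring
    · -- leaf case
      intro w hB
      have hwt : w ∈ t := (mem_nbhd.mp (hB ▸ Finset.mem_singleton_self w)).1
      have hadj : G.Adj v w := (mem_nbhd.mp (hB ▸ Finset.mem_singleton_self w)).2
      have hwv : w ≠ v := fun hh => G.irrefl (hh ▸ hadj)
      have hnb : ∀ u ∈ t, G.Adj v u → u = w := by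
        intro u hu hadju
        have : u ∈ nbhd G t v := mem_nbhd.mpr ⟨hu, hadju⟩
        rw [hB] at this; exact Finset.mem_singleton.mp this
      have hlow : LowCond G t := ⟨v, hv, by rw [hB]; simp⟩
      rw [Hfun_eq G t hlow]
      rcases eq_or_ne hlow.choose v with he | he
      · have hne : nbhd G t hlow.choose ≠ ∅ := by rw [he, hB]; simp
        rw [dif_neg hne]
        have hcw : (Finset.nonempty_iff_ne_empty.mpr hne).choose = w :=
          choose_of_singleton (by rw [he, hB]) hne
        rw [hcw, he]
      · -- diamond, v₀ ≠ v
        obtain ⟨hv0t, hv0c⟩ := hlow.choose_spec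
        set v₀ := hlow.choose with hv0def
        have hvv₀ : v ≠ v₀ := fun hh => he hh.symm
        have hvmem : v ∈ t.erase v₀ := Finset.mem_erase.mpr ⟨hvv₀, hv⟩
        have hv₀mem : v₀ ∈ t.erase v := Finset.mem_erase.mpr ⟨he, hv0t⟩
        rcases Finset.eq_empty_or_nonempty (nbhd G t v₀) with h0 | hne0
        · -- v₀ isolated
          have hwv₀ : w ≠ v₀ := by
            intro hh
            have hadj' : G.Adj v v₀ := by rw [← hh]; exact hadj
            have hm : v ∈ nbhd G t v₀ := mem_nbhd.mpr ⟨hv, hadj'.symm⟩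
            rw [h0] at hm; exact absurd hm (Finset.notMem_empty v)
          rw [dif_pos h0]
          have e1 : Hfun G (t.erase v₀) = xK * Hfun G ((t.erase v₀).erase v) +
              yK * Hfun G (((t.erase v₀).erase v).erase w) := by
            apply IHleaf _ (hec _ hv0t) _ hvmem w
            rw [nbhd_erase, hB, erase_single (Ne.symm hwv₀)]
          have e2 : Hfun G (t.erase v) = sK * Hfun G ((t.erase v).erase v₀) := by
            apply IHiso _ (hec _ hv) _ hv₀mem
            rw [nbhd_erase, h0, Finset.erase_empty]
          have e3 : Hfun G ((t.erase v).erase w) = sK * Hfun G (((t.erase v).erase w).erase v₀) := by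
            apply IHiso _ (hec2 _ hv _) _
              (Finset.mem_erase.mpr ⟨fun hh => hwv₀ hh.symm, hv₀mem⟩)
            simp [nbhd_erase, h0]
          rw [e1, e2, e3, Finset.erase_right_comm (s := t) (a := v₀) (b := v),
            Finset.erase_right_comm (s := t.erase v) (a := v₀) (b := w)]
          ring
        · obtain ⟨w₀, hw₀⟩ := Finset.card_eq_one.mp
            (le_antisymm hv0c (Finset.card_pos.mpr hne0))
          have hw₀t : w₀ ∈ t := (mem_nbhd.mp (hw₀ ▸ Finset.mem_singleton_self w₀)).1
          have hadj₀ : G.Adj v₀ w₀ := (mem_nbhd.mp (hw₀ ▸ Finset.mem_singleton_self w₀)).2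
          have hw₀v₀ : w₀ ≠ v₀ := fun hh => G.irrefl (hh ▸ hadj₀)
          have hne : nbhd G t v₀ ≠ ∅ := by rw [hw₀]; simp
          rw [dif_neg hne, choose_of_singleton hw₀ hne]
          rcases eq_or_ne w₀ v with hw₀v | hw₀v
          · -- K2 component: w₀ = v, and then w = v₀
            have hadj₀v : G.Adj v₀ v := by rw [← hw₀v]; exact hadj₀
            have hwv₀ : w = v₀ := by
              have hm : v₀ ∈ nbhd G t v := mem_nbhd.mpr ⟨hv0t, hadj₀v.symm⟩
              rw [hB] at hm
              exact (Finset.mem_singleton.mp hm).symm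
            rw [hw₀v, hwv₀]
            have e1 : Hfun G (t.erase v₀) = sK * Hfun G ((t.erase v₀).erase v) := by
              apply IHiso _ (hec _ hv0t) _ hvmem
              rw [nbhd_erase, hB, hwv₀]
              exact Finset.erase_singleton v₀
            have e2 : Hfun G (t.erase v) = sK * Hfun G ((t.erase v).erase v₀) := by
              apply IHiso _ (hec _ hv) _ hv₀mem
              rw [nbhd_erase, hw₀, hw₀v]
              exact Finset.erase_singleton v
            rw [e1, e2, Finset.erase_right_comm]
            try ring
          · -- w₀ ≠ v
            have hnadjv : ¬ G.Adj v₀ v := by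
              intro hh
              have hm : v ∈ nbhd G t v₀ := mem_nbhd.mpr ⟨hv, hh⟩
              rw [hw₀] at hm
              exact hw₀v (Finset.mem_singleton.mp hm).symm
            have hwv₀ : w ≠ v₀ := by
              intro hh; subst hh; exact hnadjv hadj.symm
            rcases eq_or_ne w₀ w with hww₀ | hww₀
            · -- shared neighbor
              rw [hww₀]
              have e1 : Hfun G (t.erase v₀) = xK * Hfun G ((t.erase v₀).erase v) +
                  yK * Hfun G (((t.erase v₀).erase v).erase w) := by
                apply IHleaf _ (hec _ hv0t) _ hvmem w
                rw [nbhd_erase, hB, erase_single (Ne.symm hwv₀)]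
              have e2 : Hfun G ((t.erase v₀).erase w) =
                  sK * Hfun G (((t.erase v₀).erase w).erase v) := by
                apply IHiso _ (hec2 _ hv0t _) _
                  (Finset.mem_erase.mpr ⟨Ne.symm hwv, hvmem⟩)
                rw [nbhd_erase, nbhd_erase, hB, erase_single (Ne.symm hwv₀)]
                exact Finset.erase_singleton w
              have e3 : Hfun G (t.erase v) = xK * Hfun G ((t.erase v).erase v₀) +
                  yK * Hfun G (((t.erase v).erase v₀).erase w) := by
                apply IHleaf _ (hec _ hv) _ hv₀mem w
                rw [nbhd_erase, hw₀, hww₀, erase_single (Ne.symm hwv)]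
              have e4 : Hfun G ((t.erase v).erase w) =
                  sK * Hfun G (((t.erase v).erase w).erase v₀) := by
                apply IHiso _ (hec2 _ hv _) _
                  (Finset.mem_erase.mpr ⟨Ne.symm hwv₀, hv₀mem⟩)
                rw [nbhd_erase, nbhd_erase, hw₀, hww₀, erase_single (Ne.symm hwv)]
                exact Finset.erase_singleton w
              rw [e1, e2, e3, e4,
                Finset.erase_right_comm (s := t) (a := v₀) (b := v),
                show ((t.erase v₀).erase w).erase v = ((t.erase v).erase w).erase v₀ by
                  rw [Finset.erase_right_comm (s := t.erase v₀) (a := w) (b := v),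
                    Finset.erase_right_comm (s := t) (a := v₀) (b := v),
                    Finset.erase_right_comm (s := t.erase v) (a := v₀) (b := w)]]
              try ring
            · -- fully disjoint
              have hw₀w : w₀ ≠ w := hww₀
              have e1 : Hfun G (t.erase v₀) = xK * Hfun G ((t.erase v₀).erase v) +
                  yK * Hfun G (((t.erase v₀).erase v).erase w) := by
                apply IHleaf _ (hec _ hv0t) _ hvmem w
                rw [nbhd_erase, hB, erase_single (Ne.symm hwv₀)]
              have e2 : Hfun G ((t.erase v₀).erase w₀) =
                  xK * Hfun G (((t.erase v₀).erase w₀).erase v) +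
                  yK * Hfun G ((((t.erase v₀).erase w₀).erase v).erase w) := by
                apply IHleaf _ (hec2 _ hv0t _) _
                  (Finset.mem_erase.mpr ⟨fun hh => hw₀v hh.symm, hvmem⟩) w
                rw [nbhd_erase, nbhd_erase, hB, erase_single (Ne.symm hwv₀), erase_single hw₀w]
              have e3 : Hfun G (t.erase v) = xK * Hfun G ((t.erase v).erase v₀) +
                  yK * Hfun G (((t.erase v).erase v₀).erase w₀) := by
                apply IHleaf _ (hec _ hv) _ hv₀mem w₀
                rw [nbhd_erase, hw₀, erase_single (Ne.symm hw₀v)]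
              have e4 : Hfun G ((t.erase v).erase w) =
                  xK * Hfun G (((t.erase v).erase w).erase v₀) +
                  yK * Hfun G ((((t.erase v).erase w).erase v₀).erase w₀) := by
                apply IHleaf _ (hec2 _ hv _) _
                  (Finset.mem_erase.mpr ⟨fun hh => hwv₀ hh.symm, hv₀mem⟩) w₀
                rw [nbhd_erase, nbhd_erase, hw₀, erase_single (Ne.symm hw₀v), erase_single (Ne.symm hw₀w)]
              rw [e1, e2, e3, e4]
              rw [Finset.erase_right_comm (s := t) (a := v₀) (b := v)]
              rw [show ((t.erase v₀).erase w₀).erase v = ((t.erase v).erase v₀).erase w₀ by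
                  rw [Finset.erase_right_comm (s := t.erase v₀) (a := w₀) (b := v),
                    Finset.erase_right_comm (s := t) (a := v₀) (b := v)]]
              rw [Finset.erase_right_comm (s := (t.erase v).erase v₀) (a := w₀) (b := w),
                Finset.erase_right_comm (s := t.erase v) (a := v₀) (b := w)]
              try ring


lemma Hfun_isolated (G : SimpleGraph V) {t : Finset V} {v : V} (hv : v ∈ t)
    (h : nbhd G t v = ∅) : Hfun G t = sK * Hfun G (t.erase v) :=
  (Hfun_main G t.card t le_rfl v hv).1 h

lemma Hfun_leaf (G : SimpleGraph V) {t : Finset V} {v w : V} (hv : v ∈ t)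
    (h : nbhd G t v = {w}) :
    Hfun G t = xK * Hfun G (t.erase v) + yK * Hfun G ((t.erase v).erase w) :=
  (Hfun_main G t.card t le_rfl v hv).2 w h

lemma Hfun_not_low (G : SimpleGraph V) {t : Finset V} (h : ¬ LowCond G t) :
    Hfun G t = 1 := by
  rcases Finset.eq_empty_or_nonempty t with rfl | htne
  · exact Hfun_empty G
  · obtain ⟨m, hm⟩ : ∃ m, t.card = m + 1 :=
      ⟨t.card - 1, by have := Finset.card_pos.mpr htne; omega⟩
    rw [show Hfun G t = Hfix G t.card t from rfl, hm, Hfix, dif_neg h]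

lemma Hfun_mul (G : SimpleGraph V) (hG : ∀ u : Finset V, u.Nonempty → LowCond G u) :
    ∀ (n : ℕ) (t₁ t₂ : Finset V), (t₁ ∪ t₂).card ≤ n → Disjoint t₁ t₂ →
      (∀ a ∈ t₁, ∀ b ∈ t₂, ¬ G.Adj a b) →
      Hfun G (t₁ ∪ t₂) = Hfun G t₁ * Hfun G t₂ := by
  intro n
  induction n with
  | zero =>
    intro t₁ t₂ hc _ _
    obtain ⟨h1, h2⟩ := Finset.union_eq_empty.mp (Finset.card_eq_zero.mp (Nat.le_zero.mp hc))
    subst h1; subst h2; simp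
  | succ n ih =>
    intro t₁ t₂ hc hdisj hcross
    rcases Finset.eq_empty_or_nonempty (t₁ ∪ t₂) with hu | hune
    · obtain ⟨h1, h2⟩ := Finset.union_eq_empty.mp hu
      subst h1; subst h2; simp
    · -- a key step applicable to a low vertex in the left part
      have key : ∀ (s₁ s₂ : Finset V), (s₁ ∪ s₂).card ≤ n + 1 → Disjoint s₁ s₂ →
          (∀ a ∈ s₁, ∀ b ∈ s₂, ¬ G.Adj a b) →
          ∀ v ∈ s₁, (nbhd G (s₁ ∪ s₂) v).card ≤ 1 →
          Hfun G (s₁ ∪ s₂) = Hfun G s₁ * Hfun G s₂ := by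
        intro s₁ s₂ hc hdisj hcross v hv hlow
        have hvu : v ∈ s₁ ∪ s₂ := Finset.mem_union_left _ hv
        have hvn2 : v ∉ s₂ := fun hh => (Finset.disjoint_left.mp hdisj) hv hh
        have hnb : nbhd G (s₁ ∪ s₂) v = nbhd G s₁ v := by
          ext a
          simp only [mem_nbhd, Finset.mem_union]
          constructor
          · rintro ⟨ha | ha, hadj⟩
            · exact ⟨ha, hadj⟩
            · exact absurd hadj (hcross v hv a ha)
          · rintro ⟨ha, hadj⟩; exact ⟨Or.inl ha, hadj⟩
        have herase : (s₁ ∪ s₂).erase v = (s₁.erase v) ∪ s₂ := by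
          rw [Finset.erase_union_distrib, Finset.erase_eq_of_notMem hvn2]
        have hcard1 : ((s₁.erase v) ∪ s₂).card ≤ n := by
          rw [← herase]
          have := Finset.card_erase_of_mem hvu
          have := Finset.card_pos.mpr ⟨v, hvu⟩
          omega
        have hdisj1 : Disjoint (s₁.erase v) s₂ :=
          Finset.disjoint_of_subset_left (Finset.erase_subset _ _) hdisj
        have hcross1 : ∀ a ∈ s₁.erase v, ∀ b ∈ s₂, ¬ G.Adj a b :=
          fun a ha b hb => hcross a (Finset.mem_of_mem_erase ha) b hb
        rcases Finset.eq_empty_or_nonempty (nbhd G s₁ v) with h0 | hne0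
        · have e0 : Hfun G (s₁ ∪ s₂) = sK * Hfun G ((s₁ ∪ s₂).erase v) :=
            Hfun_isolated G hvu (by rw [hnb, h0])
          have e1 : Hfun G s₁ = sK * Hfun G (s₁.erase v) := Hfun_isolated G hv h0
          rw [e0, herase, ih _ _ hcard1 hdisj1 hcross1, e1]
          ring
        · obtain ⟨w, hw⟩ := Finset.card_eq_one.mp
            (le_antisymm (by rw [← hnb]; exact hlow) (Finset.card_pos.mpr hne0))
          have hwmem : w ∈ nbhd G s₁ v := hw ▸ Finset.mem_singleton_self w
          have hw1 : w ∈ s₁ := (mem_nbhd.mp hwmem).1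
          have hwu : w ∈ s₁ ∪ s₂ := Finset.mem_union_left _ hw1
          have e0 : Hfun G (s₁ ∪ s₂) = xK * Hfun G ((s₁ ∪ s₂).erase v) +
              yK * Hfun G (((s₁ ∪ s₂).erase v).erase w) :=
            Hfun_leaf G hvu (by rw [hnb, hw])
          have e1 : Hfun G s₁ = xK * Hfun G (s₁.erase v) +
              yK * Hfun G ((s₁.erase v).erase w) := Hfun_leaf G hv hw
          have herase2 : ((s₁ ∪ s₂).erase v).erase w = ((s₁.erase v).erase w) ∪ s₂ := by
            have hwn2 : w ∉ s₂ := fun hh => (Finset.disjoint_left.mp hdisj) hw1 hh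
            rw [herase, Finset.erase_union_distrib, Finset.erase_eq_of_notMem hwn2]
          have hcard2 : (((s₁.erase v).erase w) ∪ s₂).card ≤ n := by
            rw [← herase2]
            have h1 := Finset.card_erase_le (s := (s₁ ∪ s₂).erase v) (a := w)
            have := Finset.card_erase_of_mem hvu
            have := Finset.card_pos.mpr ⟨v, hvu⟩
            omega
          have hdisj2 : Disjoint ((s₁.erase v).erase w) s₂ :=
            Finset.disjoint_of_subset_left
              ((Finset.erase_subset _ _).trans (Finset.erase_subset _ _)) hdisj
          have hcross2 : ∀ a ∈ (s₁.erase v).erase w, ∀ b ∈ s₂, ¬ G.Adj a b :=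
            fun a ha b hb =>
              hcross a (Finset.mem_of_mem_erase (Finset.mem_of_mem_erase ha)) b hb
          rw [e0, herase2, herase, ih _ _ hcard1 hdisj1 hcross1,
            ih _ _ hcard2 hdisj2 hcross2, e1]
          ring
      obtain ⟨v, hvu, hlow⟩ := hG _ hune
      rcases Finset.mem_union.mp hvu with hv1 | hv2
      · exact key t₁ t₂ hc hdisj hcross v hv1 hlow
      · have hcomm : t₁ ∪ t₂ = t₂ ∪ t₁ := Finset.union_comm _ _
        rw [hcomm]
        rw [hcomm] at hc hlow
        rw [key t₂ t₁ hc hdisj.symm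
          (fun a ha b hb => fun hadj => hcross b hb a ha hadj.symm) v hv2 hlow]
        ring


section Induce

variable {s : Set V} [DecidableEq ↥s]

/-- The embedding of the subtype into the ambient type, as a `Finset` map. -/
def semb (s : Set V) : ↥s ↪ V := ⟨Subtype.val, Subtype.val_injective⟩

@[simp] lemma semb_apply {s : Set V} (b : ↥s) : semb s b = b.val := rfl

lemma nbhd_induce_map (G : SimpleGraph V) (t : Finset ↥s) (v : ↥s) :
    nbhd G (t.map (semb s)) v.val = (nbhd (G.induce s) t v).map (semb s) := by
  ext a
  simp only [mem_nbhd, Finset.mem_map, semb_apply]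
  constructor
  · rintro ⟨⟨b, hb, rfl⟩, hadj⟩
    exact ⟨b, ⟨hb, by simpa using hadj⟩, rfl⟩
  · rintro ⟨b, ⟨hbt, hadj⟩, rfl⟩
    exact ⟨⟨b, hbt, rfl⟩, by simpa using hadj⟩

lemma lowcond_induce_iff (G : SimpleGraph V) (t : Finset ↥s) :
    LowCond (G.induce s) t ↔ LowCond G (t.map (semb s)) := by
  constructor
  · rintro ⟨v, hv, hc⟩
    refine ⟨v.val, Finset.mem_map_of_mem _ hv, ?_⟩
    rw [nbhd_induce_map, Finset.card_map]
    exact hc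
  · rintro ⟨a, ha, hc⟩
    obtain ⟨b, hb, rfl⟩ := Finset.mem_map.mp ha
    refine ⟨b, hb, ?_⟩
    simp only [semb_apply] at hc
    rw [nbhd_induce_map, Finset.card_map] at hc
    exact hc

lemma Hfun_induce (G : SimpleGraph V) :
    ∀ (n : ℕ) (t : Finset ↥s), t.card ≤ n →
      Hfun (G.induce s) t = Hfun G (t.map (semb s)) := by
  intro n
  induction n with
  | zero =>
    intro t ht
    rw [Finset.card_eq_zero.mp (Nat.le_zero.mp ht)]
    simp
  | succ n ih =>
    intro t ht
    by_cases hc : LowCond (G.induce s) t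
    · obtain ⟨v, hv, hcard⟩ := hc
      have hvm : v.val ∈ t.map (semb s) := Finset.mem_map_of_mem _ hv
      have hcm : (t.erase v).card ≤ n := by
        have := Finset.card_erase_of_mem hv
        have := Finset.card_pos.mpr ⟨v, hv⟩
        omega
      rcases Finset.eq_empty_or_nonempty (nbhd (G.induce s) t v) with h0 | hne0
      · rw [Hfun_isolated (G.induce s) hv h0,
          Hfun_isolated G hvm (by rw [nbhd_induce_map, h0]; simp),
          ih _ hcm, Finset.map_erase]
        simp only [semb_apply]
      · obtain ⟨w, hw⟩ := Finset.card_eq_one.mp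
          (le_antisymm hcard (Finset.card_pos.mpr hne0))
        have hcm2 : ((t.erase v).erase w).card ≤ n :=
          le_trans Finset.card_erase_le hcm
        rw [Hfun_leaf (G.induce s) hv hw,
          Hfun_leaf G hvm (w := w.val)
            (by rw [nbhd_induce_map, hw]; simp [semb]),
          ih _ hcm, ih _ hcm2, Finset.map_erase, Finset.map_erase, Finset.map_erase]
        simp only [semb_apply]
    · rw [Hfun_not_low (G.induce s) hc,
        Hfun_not_low G (fun hh => hc ((lowcond_induce_iff G t).mpr hh))]

end Induce

section LeafExists

lemma exists_low_vertex {W : Type} [Fintype W] [Nonempty W] (G : SimpleGraph W)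
    (hG : G.IsAcyclic) : ∃ v : W, ((Finset.univ.filter (G.Adj v)).card ≤ 1) := by
  by_contra hcon
  push_neg at hcon
  -- every vertex has two distinct neighbors
  have two_nbrs : ∀ v : W, ∀ c : W, ∃ w : W, G.Adj v w ∧ w ≠ c := by
    intro v c
    obtain ⟨a, ha, b, hb, hab⟩ := Finset.one_lt_card.mp (hcon v)
    rw [Finset.mem_filter] at ha hb
    rcases eq_or_ne a c with rfl | hac
    · exact ⟨b, hb.2, Ne.symm hab⟩
    · exact ⟨a, ha.2, hac⟩
  have key : ∀ k : ℕ, ∃ (a b : W) (p : G.Walk a b), p.IsPath ∧ k ≤ p.length := by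
    intro k
    induction k with
    | zero =>
      exact ⟨Classical.arbitrary W, _, SimpleGraph.Walk.nil, SimpleGraph.Walk.IsPath.nil,
        Nat.zero_le _⟩
    | succ k ihk =>
      obtain ⟨a, b, p, hp, hk⟩ := ihk
      cases p with
      | nil =>
        obtain ⟨w, hw, -⟩ := two_nbrs a a
        have hk0 : k = 0 := by simpa using hk
        refine ⟨w, a, (SimpleGraph.Path.singleton hw.symm).1,
          (SimpleGraph.Path.singleton hw.symm).2, ?_⟩
        simp [SimpleGraph.Path.singleton, hk0]
      | cons hadj q =>
        rename_i c
        set p' := SimpleGraph.Walk.cons hadj q with hp'def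
        obtain ⟨w, hw, hwc⟩ := two_nbrs a c
        have hwa : w ≠ a := fun hh => G.irrefl (hh ▸ hw)
        have hwns : w ∉ p'.support := by
          intro hws
          -- build a cycle
          have htu := hp.takeUntil hws
          have hcyc : (SimpleGraph.Walk.cons hw.symm (p'.takeUntil w hws)).IsCycle := by
            refine SimpleGraph.Path.cons_isCycle ⟨p'.takeUntil w hws, htu⟩ hw.symm ?_
            intro hmem
            have hsub := p'.edges_takeUntil_subset hws
            have hmem' : s(w, a) ∈ p'.edges := hsub hmem
            rw [hp'def] at hmem'
            rw [SimpleGraph.Walk.edges_cons] at hmem'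
            rcases List.mem_cons.mp hmem' with heq | hmemq
            · rw [Sym2.eq_iff] at heq
              rcases heq with ⟨h1, -⟩ | ⟨h1, h2⟩
              · exact hwa h1
              · exact hwc h1
            · have : a ∈ q.support := SimpleGraph.Walk.snd_mem_support_of_mem_edges q hmemq
              have hq := (SimpleGraph.Walk.cons_isPath_iff hadj q).mp hp
              exact hq.2 this
          exact hG _ hcyc
        refine ⟨w, b, SimpleGraph.Walk.cons hw.symm p', ?_, ?_⟩
        · exact (SimpleGraph.Walk.cons_isPath_iff hw.symm p').mpr ⟨hp, hwns⟩
        · rw [SimpleGraph.Walk.length_cons]; omega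
  obtain ⟨a, b, p, hp, hk⟩ := key (Fintype.card W)
  exact absurd hp.length_lt (by omega)

lemma isAcyclic_comap {W : Type} (G : SimpleGraph V) (f : W ↪ V) (hG : G.IsAcyclic) :
    (G.comap f).IsAcyclic := by
  intro v c hc
  exact hG _ (hc.map (f := (SimpleGraph.Embedding.comap f G).toHom)
    (SimpleGraph.Embedding.comap f G).injective)

lemma isAcyclic_induce (G : SimpleGraph V) (s : Set V) (hG : G.IsAcyclic) :
    (G.induce s).IsAcyclic :=
  isAcyclic_comap G (Function.Embedding.subtype _) hG

lemma exists_low_of_acyclic [Fintype V] (G : SimpleGraph V) (hG : G.IsAcyclic)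
    (t : Finset V) (ht : t.Nonempty) : LowCond G t := by
  classical
  have : Nonempty ↥(↑t : Set V) := ⟨⟨ht.choose, ht.choose_spec⟩⟩
  obtain ⟨v, hv⟩ := exists_low_vertex (G.induce (↑t : Set V))
    (isAcyclic_induce G _ hG)
  refine ⟨v.val, v.prop, ?_⟩
  have hset : nbhd G t v.val =
      (Finset.univ.filter ((G.induce (↑t : Set V)).Adj v)).map (semb (↑t : Set V)) := by
    ext a
    simp only [mem_nbhd, Finset.mem_map, Finset.mem_filter, Finset.mem_univ, true_and,
      SimpleGraph.comap_adj, Function.Embedding.coe_subtype, semb,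
      Function.Embedding.coeFn_mk]
    constructor
    · rintro ⟨hat, hadj⟩
      exact ⟨⟨a, hat⟩, by simpa using hadj, rfl⟩
    · rintro ⟨b, hb, rfl⟩
      exact ⟨b.prop, by simpa using hb⟩
  rw [hset, Finset.card_map]
  exact hv

end LeafExists



section TransportUniv

variable [Fintype V]

lemma Hfun_induce_univ (G : SimpleGraph V) (s : Set V) {i : Fintype ↥s}
    {j : DecidableEq ↥s} {t : Finset V} (ht : (@Finset.univ _ i).map (semb s) = t) :
    @Hfun _ j (G.induce s) (@Finset.univ _ i) = Hfun G t := by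
  rw [@Hfun_induce V _ s j G (@Finset.univ _ i).card (@Finset.univ _ i) le_rfl, ht]

lemma Hfun_induce_eq (G : SimpleGraph V) (s : Set V) {i : Fintype ↥s}
    {j : DecidableEq ↥s} {t : Finset V} (ht : ∀ a : V, a ∈ t ↔ a ∈ s) :
    @Hfun _ j (G.induce s) (@Finset.univ _ i) = Hfun G t := by
  apply Hfun_induce_univ
  ext a
  rw [ht a]
  constructor
  · intro h
    obtain ⟨b, -, rfl⟩ := Finset.mem_map.mp h
    exact b.prop
  · intro h
    exact Finset.mem_map.mpr ⟨⟨a, h⟩, Finset.mem_univ _, rfl⟩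

end TransportUniv

end Homfly

open Homfly

/-- The recursively defined HOMFLY polynomial of a forest quiver is well-defined:
a function satisfying the defining rules exists, and any two such functions agree
on every forest. -/
noncomputable def fHomfly : GraphFun := fun V _ _ G => Hfun G Finset.univ

lemma fHomfly_eval {W : Type} {i : Fintype W} {j : DecidableEq W} (G : SimpleGraph W) :
    @fHomfly W i j G = @Hfun W j G (@Finset.univ W i) := rfl

lemma fHomfly_rules : HomflyRules fHomfly := by
  refine ⟨?_, ?_, ?_, ?_⟩
  · intro V _ _ G hV
    rw [fHomfly_eval, Finset.univ_eq_empty, Hfun_empty]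
  · intro V iF iD G hV
    obtain ⟨v, hvall⟩ := Fintype.card_eq_one_iff.mp hV
    have huniv : (Finset.univ : Finset V) = {v} := by
      ext a; simp [hvall a]
    have h0 : nbhd G ({v} : Finset V) v = ∅ := by
      ext a
      simp only [mem_nbhd, Finset.mem_singleton, Finset.notMem_empty, iff_false, not_and]
      rintro rfl hadj
      exact G.irrefl hadj
    rw [fHomfly_eval, huniv, Hfun_isolated G (Finset.mem_singleton_self v) h0,
      Finset.erase_singleton, Hfun_empty, mul_one]
    rfl
  · intro V iF iD G _ v w hL
    have hnb : nbhd G Finset.univ v = {w} := by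
      ext a
      simp only [mem_nbhd, Finset.mem_univ, true_and, Finset.mem_singleton]
      rw [← SimpleGraph.mem_neighborSet, hL, Set.mem_singleton_iff]
    rw [fHomfly_eval, fHomfly_eval, fHomfly_eval,
      Hfun_induce_eq G {x : V | x ≠ v} (t := Finset.univ.erase v)
        (fun a => by simp [Finset.mem_erase]),
      Hfun_induce_eq G {x : V | x ≠ v ∧ x ≠ w} (t := (Finset.univ.erase v).erase w)
        (fun a => by simp [Finset.mem_erase]; tauto),
      Hfun_leaf G (Finset.mem_univ v) hnb]
    rfl
  · intro V iF iD G hac s hcross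
    classical
    set t₁ : Finset V := Finset.univ.filter (fun x => x ∈ s) with ht₁
    set t₂ : Finset V := Finset.univ.filter (fun x => x ∉ s) with ht₂
    have hm1 : ∀ a : V, a ∈ t₁ ↔ a ∈ s := by
      intro a; rw [ht₁, Finset.mem_filter]; simp
    have hm2 : ∀ a : V, a ∈ t₂ ↔ a ∈ sᶜ := by
      intro a; rw [ht₂, Finset.mem_filter]; simp
    have hu : t₁ ∪ t₂ = Finset.univ := by
      ext a; by_cases ha : a ∈ s <;> simp [ht₁, ht₂, ha]
    have hd : Disjoint t₁ t₂ := by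
      rw [Finset.disjoint_left]
      intro a h1 h2
      rw [ht₁, Finset.mem_filter] at h1
      rw [ht₂, Finset.mem_filter] at h2
      exact h2.2 h1.2
    have hcr : ∀ a ∈ t₁, ∀ b ∈ t₂, ¬ G.Adj a b := by
      intro a ha b hb
      rw [ht₁, Finset.mem_filter] at ha
      rw [ht₂, Finset.mem_filter] at hb
      exact hcross a ha.2 b hb.2
    rw [fHomfly_eval, fHomfly_eval, fHomfly_eval,
      Hfun_induce_eq G s hm1, Hfun_induce_eq G sᶜ hm2, ← hu,
      Hfun_mul G (fun u hu' => exists_low_of_acyclic G hac u hu')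
        (t₁ ∪ t₂).card t₁ t₂ le_rfl hd hcr]

lemma homfly_unique (f g : GraphFun) (hf : HomflyRules f) (hg : HomflyRules g) :
    ∀ (n : ℕ) (V : Type) [Fintype V] [DecidableEq V] (G : SimpleGraph V),
      Fintype.card V ≤ n → G.IsAcyclic → f V G = g V G := by
  intro n
  induction n with
  | zero =>
    intro V _ _ G hc _
    have hemp : IsEmpty V := Fintype.card_eq_zero_iff.mp (Nat.le_zero.mp hc)
    rw [hf.1 V G hemp, hg.1 V G hemp]
  | succ n ih =>
    intro V instF instD G hc hac
    by_cases hemp : IsEmpty V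
    · rw [hf.1 V G hemp, hg.1 V G hemp]
    · have hne : Nonempty V := not_isEmpty_iff.mp hemp
      obtain ⟨v, -, hlow⟩ := exists_low_of_acyclic G hac Finset.univ Finset.univ_nonempty
      rcases Finset.eq_empty_or_nonempty (nbhd G Finset.univ v) with h0 | hne0
      · -- v isolated : use the splitting rule with s = {v}
        have hnc : ∀ x ∈ ({v} : Set V), ∀ y ∉ ({v} : Set V), ¬ G.Adj x y := by
          intro x hx y _ hadj
          rw [Set.mem_singleton_iff] at hx
          subst hx
          have : y ∈ nbhd G Finset.univ x := mem_nbhd.mpr ⟨Finset.mem_univ _, hadj⟩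
          rw [h0] at this
          exact absurd this (Finset.notMem_empty y)
        rw [hf.2.2.2 V G hac {v} hnc, hg.2.2.2 V G hac {v} hnc]
        congr 1
        · have hval : ∀ (i : Fintype ↥({v} : Set V)) (j : DecidableEq ↥({v} : Set V)),
              @f _ i j (G.induce ({v} : Set V)) = @g _ i j (G.induce ({v} : Set V)) := by
            intro i j
            letI := i; letI := j
            have hcard1 : Fintype.card ↥({v} : Set V) = 1 :=
              Fintype.card_eq_one_iff.mpr ⟨⟨v, rfl⟩, fun b => Subtype.ext b.2⟩
            rw [hf.2.1 _ _ hcard1, hg.2.1 _ _ hcard1]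
          exact hval _ _
        · have hcardc : ∀ (i : Fintype ↥(({v} : Set V)ᶜ)), @Fintype.card _ i ≤ n := by
            intro i
            have h4 : @Fintype.card _ i < Fintype.card V :=
              @Fintype.card_lt_of_injective_of_notMem _ _ i _ Subtype.val
                Subtype.val_injective v (by rintro ⟨x, hx⟩; exact x.prop (by rw [hx]; rfl))
            omega
          have hval2 : ∀ (i : Fintype ↥(({v} : Set V)ᶜ)) (j : DecidableEq ↥(({v} : Set V)ᶜ)),
              @f _ i j (G.induce (({v} : Set V)ᶜ)) = @g _ i j (G.induce (({v} : Set V)ᶜ)) :=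
            fun i j => @ih _ i j (G.induce (({v} : Set V)ᶜ)) (hcardc i)
              (isAcyclic_induce G _ hac)
          exact hval2 _ _
      · obtain ⟨w, hw⟩ := Finset.card_eq_one.mp
          (le_antisymm hlow (Finset.card_pos.mpr hne0))
        have hL : IsLeaf G v w := by
          ext a
          rw [SimpleGraph.mem_neighborSet, Set.mem_singleton_iff]
          constructor
          · intro hadj
            have : a ∈ nbhd G Finset.univ v := mem_nbhd.mpr ⟨Finset.mem_univ _, hadj⟩
            rw [hw] at this
            exact Finset.mem_singleton.mp this
          · rintro rfl
            exact (mem_nbhd.mp (hw ▸ Finset.mem_singleton_self a)).2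
        rw [hf.2.2.1 V G hac v w hL, hg.2.2.1 V G hac v w hL]
        congr 1
        · congr 1
          have hcard1 : ∀ (i : Fintype ↥{x : V | x ≠ v}), @Fintype.card _ i ≤ n := by
            intro i
            have h4 : @Fintype.card _ i < Fintype.card V :=
              @Fintype.card_lt_of_injective_of_notMem _ _ i _ Subtype.val
                Subtype.val_injective v (by rintro ⟨x, hx⟩; exact x.prop hx)
            omega
          have hval2 : ∀ (i : Fintype ↥{x : V | x ≠ v}) (j : DecidableEq ↥{x : V | x ≠ v}),
              @f _ i j (G.induce {x : V | x ≠ v}) = @g _ i j (G.induce {x : V | x ≠ v}) :=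
            fun i j => @ih _ i j (G.induce {x : V | x ≠ v}) (hcard1 i)
              (isAcyclic_induce G _ hac)
          exact hval2 _ _
        · congr 1
          have hcard2 : ∀ (i : Fintype ↥{x : V | x ≠ v ∧ x ≠ w}), @Fintype.card _ i ≤ n := by
            intro i
            have h4 : @Fintype.card _ i < Fintype.card V :=
              @Fintype.card_lt_of_injective_of_notMem _ _ i _ Subtype.val
                Subtype.val_injective v (by rintro ⟨x, hx⟩; exact x.prop.1 hx)
            omega
          have hval2 : ∀ (i : Fintype ↥{x : V | x ≠ v ∧ x ≠ w})
              (j : DecidableEq ↥{x : V | x ≠ v ∧ x ≠ w}),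
              @f _ i j (G.induce {x : V | x ≠ v ∧ x ≠ w}) =
                @g _ i j (G.induce {x : V | x ≠ v ∧ x ≠ w}) :=
            fun i j => @ih _ i j (G.induce {x : V | x ≠ v ∧ x ≠ w}) (hcard2 i)
              (isAcyclic_induce G _ hac)
          exact hval2 _ _

theorem homfly_well_defined :
    (∃ f : GraphFun, HomflyRules f) ∧
    ∀ f g : GraphFun, HomflyRules f → HomflyRules g →
      ∀ (V : Type) [Fintype V] [DecidableEq V] (G : SimpleGraph V),
        G.IsAcyclic → f V G = g V G := by
  refine ⟨⟨fHomfly, fHomfly_rules⟩, ?_⟩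
  intro f g hf hg V _ _ G hac
  exact homfly_unique f g hf hg (Fintype.card V) V G le_rfl hac
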